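/- Let (A,B) be a regular matrix pair in ℂ^{n×n}, and let Q̂, Q̌, Ẑ, Ž be unitary matrices with Q̂e_1 = σQ̌e_1 for some |σ| = 1, such that (Â, B̂) = Q̂*(A,B)Ẑ and (Ǎ, B̌) = Q̌*(A,B)Ž are both proper Hessenberg pairs with the same finite pole tuple Ξ = (ξ_1,…,ξ_{n−1}), where no pole is an eigenvalue of (A,B). Then there exist unitary diagonal matrices D_1, D_2 with Â = D_1* Ǎ D_2 and B̂ = D_1* B̌ D_2; equivalently, Q̂ = Q̌D_1 and Ẑ = ŽD_2 (implicit Q theorem for proper Hessenberg pairs). -/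

import Mathlib

open Matrix

/-- A matrix is upper Hessenberg if all entries below the first subdiagonal vanish. -/
def UpperHessenberg {n : ℕ} (A : Matrix (Fin n) (Fin n) ℂ) : Prop :=
  ∀ i j : Fin n, (j : ℕ) + 1 < (i : ℕ) → A i j = 0

/-- A proper Hessenberg pair: both matrices upper Hessenberg, no subdiagonal position with
both entries zero, linearly independent first columns and linearly independent last rows. -/
def ProperHessPair {n : ℕ} (A B : Matrix (Fin (n + 1)) (Fin (n + 1)) ℂ) : Prop :=
  UpperHessenberg A ∧ UpperHessenberg B ∧
    (∀ i j : Fin (n + 1), (i : ℕ) = (j : ℕ) + 1 → ¬(A i j = 0 ∧ B i j = 0)) ∧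
    LinearIndependent ℂ ![fun i => A i 0, fun i => B i 0] ∧
    LinearIndependent ℂ ![fun j => A (Fin.last n) j, fun j => B (Fin.last n) j]

/-- If an invertible matrix maps the coordinate subspace of "first `k+1` coordinates"
into itself, then so does its inverse. -/
lemma inv_stable {m : ℕ} (M : Matrix (Fin m) (Fin m) ℂ) (hM : IsUnit M.det) (k : ℕ)
    (hstab : ∀ x : Fin m → ℂ, (∀ l : Fin m, k < (l:ℕ) → x l = 0) →
      ∀ i : Fin m, k < (i:ℕ) → M.mulVec x i = 0)
    (y : Fin m → ℂ) (hy : ∀ i : Fin m, k < (i:ℕ) → M.mulVec y i = 0) :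
    ∀ i : Fin m, k < (i:ℕ) → y i = 0 := by
  classical
  set S : Submodule ℂ (Fin m → ℂ) :=
    { carrier := {x | ∀ l : Fin m, k < (l:ℕ) → x l = 0}
      add_mem' := fun {a b} ha hb l hl => by simp [ha l hl, hb l hl]
      zero_mem' := fun l _ => rfl
      smul_mem' := fun c {x} hx l hl => by simp [hx l hl] } with hS
  have hmap : ∀ x ∈ S, M.mulVecLin x ∈ S := fun x hx i hi => hstab x hx i hi
  have hinjfull : Function.Injective M.mulVecLin := by
    intro a b hab
    have h2 : M⁻¹.mulVec (M.mulVec a) = M⁻¹.mulVec (M.mulVec b) := by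
      simpa using congrArg (M⁻¹.mulVec) hab
    rwa [mulVec_mulVec, mulVec_mulVec, Matrix.nonsing_inv_mul M hM, one_mulVec, one_mulVec] at h2
  let f : S →ₗ[ℂ] S := (M.mulVecLin).restrict hmap
  have hfinj : Function.Injective f := by
    intro ⟨a, ha⟩ ⟨b, hb⟩ hab
    have : M.mulVecLin a = M.mulVecLin b := congrArg Subtype.val hab
    exact Subtype.ext (hinjfull this)
  have hfsurj : Function.Surjective f := (LinearMap.injective_iff_surjective).mp hfinj
  have hyS : M.mulVec y ∈ S := fun i hi => hy i hi
  obtain ⟨⟨x, hx⟩, hfx⟩ := hfsurj ⟨M.mulVec y, hyS⟩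
  have : M.mulVecLin x = M.mulVec y := congrArg Subtype.val hfx
  have hxy : x = y := hinjfull (by simpa using this)
  exact fun i hi => hxy ▸ hx i hi

/-- In a matrix with orthonormal columns, if column `i` is concentrated on the diagonal,
then the rest of row `i` vanishes. -/
lemma col_orth {m : ℕ} (W : Matrix (Fin m) (Fin m) ℂ) (hW : Wᴴ * W = 1)
    (i j : Fin m) (hij : i ≠ j) (hcol : ∀ l, l ≠ i → W l i = 0) : W i j = 0 := by
  have hsum : ∀ b : Fin m, (Wᴴ * W) i b = (starRingEnd ℂ) (W i i) * W i b := by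
    intro b
    rw [Matrix.mul_apply]
    apply Finset.sum_eq_single_of_mem i (Finset.mem_univ i)
    · intro l _ hl
      rw [Matrix.conjTranspose_apply, hcol l hl]
      simp
  have h1 : (starRingEnd ℂ) (W i i) * W i i = 1 := by
    rw [← hsum i, hW, Matrix.one_apply_eq]
  have h0 : (starRingEnd ℂ) (W i i) * W i j = 0 := by
    rw [← hsum j, hW, Matrix.one_apply_ne hij]
  have hne : (starRingEnd ℂ) (W i i) ≠ 0 := left_ne_zero_of_mul_eq_one h1
  exact (mul_eq_zero.mp h0).resolve_left hne

/-- Implicit Q theorem for proper Hessenberg pairs: two unitary equivalences of a regular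
pair to proper Hessenberg form with the same finite pole tuple (poles not eigenvalues) and
essentially the same first column of Q are essentially identical. -/
theorem implicit_Q_theorem {n : ℕ}
    (A B : Matrix (Fin (n + 1)) (Fin (n + 1)) ℂ)
    (hreg : ∃ α β : ℂ, (β • A - α • B).det ≠ 0)
    (Q₁ Q₂ Z₁ Z₂ : Matrix (Fin (n + 1)) (Fin (n + 1)) ℂ)
    (hQ₁ : Q₁ ∈ Matrix.unitaryGroup (Fin (n + 1)) ℂ)
    (hQ₂ : Q₂ ∈ Matrix.unitaryGroup (Fin (n + 1)) ℂ)
    (hZ₁ : Z₁ ∈ Matrix.unitaryGroup (Fin (n + 1)) ℂ)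
    (hZ₂ : Z₂ ∈ Matrix.unitaryGroup (Fin (n + 1)) ℂ)
    (σ : ℂ) (hσ : ‖σ‖ = 1)
    (hfirst : (fun i => Q₁ i 0) = fun i => σ * Q₂ i 0)
    (A₁ B₁ A₂ B₂ : Matrix (Fin (n + 1)) (Fin (n + 1)) ℂ)
    (hA₁ : A₁ = Q₁ᴴ * A * Z₁) (hB₁ : B₁ = Q₁ᴴ * B * Z₁)
    (hA₂ : A₂ = Q₂ᴴ * A * Z₂) (hB₂ : B₂ = Q₂ᴴ * B * Z₂)
    (h₁ : ProperHessPair A₁ B₁) (h₂ : ProperHessPair A₂ B₂)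
    (ξ : Fin n → ℂ)
    (hpoles₁ : ∀ i : Fin n, B₁ i.succ i.castSucc ≠ 0 ∧
      A₁ i.succ i.castSucc = ξ i * B₁ i.succ i.castSucc)
    (hpoles₂ : ∀ i : Fin n, B₂ i.succ i.castSucc ≠ 0 ∧
      A₂ i.succ i.castSucc = ξ i * B₂ i.succ i.castSucc)
    (heig : ∀ i : Fin n, (A - ξ i • B).det ≠ 0) :
    ∃ D₁ D₂ : Matrix (Fin (n + 1)) (Fin (n + 1)) ℂ,
      D₁.IsDiag ∧ D₂.IsDiag ∧
      D₁ ∈ Matrix.unitaryGroup (Fin (n + 1)) ℂ ∧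
      D₂ ∈ Matrix.unitaryGroup (Fin (n + 1)) ℂ ∧
      A₁ = D₁ᴴ * A₂ * D₂ ∧ B₁ = D₁ᴴ * B₂ * D₂ ∧
      Q₁ = Q₂ * D₁ ∧ Z₁ = Z₂ * D₂ := by
  classical
  have star1 : ∀ P : Matrix (Fin (n+1)) (Fin (n+1)) ℂ, P ∈ Matrix.unitaryGroup (Fin (n+1)) ℂ →
      Pᴴ * P = 1 ∧ P * Pᴴ = 1 := by
    intro P hP
    rw [← Matrix.star_eq_conjTranspose]
    exact ⟨Matrix.mem_unitaryGroup_iff'.mp hP, Matrix.mem_unitaryGroup_iff.mp hP⟩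
  obtain ⟨hQ₁s, hQ₁m⟩ := star1 Q₁ hQ₁
  obtain ⟨hQ₂s, hQ₂m⟩ := star1 Q₂ hQ₂
  obtain ⟨hZ₁s, hZ₁m⟩ := star1 Z₁ hZ₁
  obtain ⟨hZ₂s, hZ₂m⟩ := star1 Z₂ hZ₂
  have cancel : ∀ P X : Matrix (Fin (n+1)) (Fin (n+1)) ℂ, P * Pᴴ = 1 → P * (Pᴴ * X) = X := by
    intro P X h; rw [← Matrix.mul_assoc, h, Matrix.one_mul]
  set U : Matrix (Fin (n+1)) (Fin (n+1)) ℂ := Q₂ᴴ * Q₁ with hU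
  set V : Matrix (Fin (n+1)) (Fin (n+1)) ℂ := Z₂ᴴ * Z₁ with hV
  have hUV_A : U * A₁ = A₂ * V := by
    rw [hU, hV, hA₁, hA₂]
    simp only [Matrix.mul_assoc]
    rw [cancel Q₁ _ hQ₁m, cancel Z₂ _ hZ₂m]
  have hUV_B : U * B₁ = B₂ * V := by
    rw [hU, hV, hB₁, hB₂]
    simp only [Matrix.mul_assoc]
    rw [cancel Q₁ _ hQ₁m, cancel Z₂ _ hZ₂m]
  have hUstar : Uᴴ * U = 1 := by
    rw [hU, Matrix.conjTranspose_mul, Matrix.conjTranspose_conjTranspose]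
    simp only [Matrix.mul_assoc]
    rw [cancel Q₂ _ hQ₂m, hQ₁s]
  have hVstar : Vᴴ * V = 1 := by
    rw [hV, Matrix.conjTranspose_mul, Matrix.conjTranspose_conjTranspose]
    simp only [Matrix.mul_assoc]
    rw [cancel Z₂ _ hZ₂m, hZ₁s]
  -- the combined pencil equation
  have hUV_AB : ∀ p : Fin n, U * (A₁ - ξ p • B₁) = (A₂ - ξ p • B₂) * V := by
    intro p
    rw [Matrix.mul_sub, Matrix.sub_mul, hUV_A, Matrix.mul_smul, Matrix.smul_mul, hUV_B]
  -- base column of U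
  have hU0 : ∀ i : Fin (n+1), i ≠ 0 → U i 0 = 0 := by
    intro i hi
    have : U i 0 = σ * (Q₂ᴴ * Q₂) i 0 := by
      rw [hU, Matrix.mul_apply, Matrix.mul_apply, Finset.mul_sum]
      apply Finset.sum_congr rfl
      intro l _
      rw [congrFun hfirst l]
      ring
    rw [this, hQ₂s, Matrix.one_apply_ne hi, mul_zero]
  -- the key inductive claim: all columns of U and V are concentrated on the diagonal
  have key : ∀ m : ℕ, ∀ j : Fin (n+1), (j:ℕ) = m →
      (∀ i, i ≠ j → U i j = 0) ∧ (∀ i, i ≠ j → V i j = 0) := by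
    intro m
    induction m using Nat.strong_induction_on with
    | _ m IH =>
    intro j hj
    have IH' : ∀ j' : Fin (n+1), (j':ℕ) < m →
        (∀ i, i ≠ j' → U i j' = 0) ∧ (∀ i, i ≠ j' → V i j' = 0) :=
      fun j' h => IH _ h j' rfl
    -- first: column j of U
    have hUcol : ∀ i, i ≠ j → U i j = 0 := by
      match m, hj with
      | 0, hj =>
        have hj0 : j = 0 := Fin.ext (by simpa using hj)
        rw [hj0]; exact hU0
      | (m' + 1), hj =>
        have hmn : m' + 1 ≤ n := by have := j.isLt; omega
        set p : Fin n := ⟨m', by omega⟩ with hp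
        have hjp : j = p.succ := Fin.ext (by simp [hp, hj])
        intro i hij
        have hijv : (i:ℕ) ≠ (j:ℕ) := fun h => hij (Fin.ext h)
        rcases Nat.lt_or_ge (i:ℕ) (j:ℕ) with hlt | hge
        · -- above the diagonal: orthogonality
          exact col_orth U hUstar i j hij (fun l hl => (IH' i (by omega)).1 l hl)
        · -- below the diagonal: use the B-relation in column m'
          have hgt : (j:ℕ) < (i:ℕ) := lt_of_le_of_ne hge (Ne.symm hijv)
          have heq : (U * B₁) i p.castSucc = (B₂ * V) i p.castSucc := by rw [hUV_B]
          rw [Matrix.mul_apply, Matrix.mul_apply] at heq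
          have hL : ∑ l, U i l * B₁ l p.castSucc = U i p.succ * B₁ p.succ p.castSucc := by
            apply Finset.sum_eq_single_of_mem p.succ (Finset.mem_univ _)
            intro l _ hl
            have hlv : (l:ℕ) ≠ m' + 1 := fun h => hl (Fin.ext (by simp [h, hp]))
            rcases Nat.lt_or_ge (l:ℕ) (m'+1) with h1 | h2
            · rw [(IH' l (by omega)).1 i (by intro h; rw [h] at hgt; omega), zero_mul]
            · rw [h₁.2.1 l p.castSucc (by simp [hp] <;> omega), mul_zero]
          have hR : ∑ l, B₂ i l * V l p.castSucc = 0 := by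
            apply Finset.sum_eq_zero
            intro l _
            by_cases hl : l = p.castSucc
            · rw [hl, h₂.2.1 i p.castSucc (by simp [hp] <;> omega), zero_mul]
            · rw [(IH' p.castSucc (by simp [hp] <;> omega)).2 l hl, mul_zero]
          rw [hL, hR] at heq
          rw [hjp]
          exact (mul_eq_zero.mp heq).resolve_right (hpoles₁ p).1
    refine ⟨hUcol, ?_⟩
    -- now: column j of V
    intro i hij
    have hijv : (i:ℕ) ≠ (j:ℕ) := fun h => hij (Fin.ext h)
    rcases Nat.lt_or_ge (i:ℕ) (j:ℕ) with hlt | hge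
    · exact col_orth V hVstar i j hij (fun l hl => (IH' i (by omega)).2 l hl)
    · have hgt : (j:ℕ) < (i:ℕ) := lt_of_le_of_ne hge (Ne.symm hijv)
      have hmn : m < n := by have := i.isLt; omega
      set p : Fin n := ⟨m, hmn⟩ with hp
      have hjp : j = p.castSucc := Fin.ext (by simp [hp, hj])
      set M : Matrix (Fin (n+1)) (Fin (n+1)) ℂ := A₂ - ξ p • B₂ with hM
      have hMfac : M = Q₂ᴴ * (A - ξ p • B) * Z₂ := by
        rw [hM, hA₂, hB₂]
        simp only [Matrix.mul_sub, Matrix.sub_mul, Matrix.mul_smul, Matrix.smul_mul]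
      have hMdet : IsUnit M.det := by
        rw [hMfac, Matrix.det_mul, Matrix.det_mul]
        have h2 : Q₂ᴴ.det * Q₂.det = 1 := by rw [← Matrix.det_mul, hQ₂s, Matrix.det_one]
        have h3 : Z₂ᴴ.det * Z₂.det = 1 := by rw [← Matrix.det_mul, hZ₂s, Matrix.det_one]
        exact ((isUnit_iff_ne_zero.mpr (left_ne_zero_of_mul_eq_one h2)).mul
          (isUnit_iff_ne_zero.mpr (heig p))).mul
            (isUnit_iff_ne_zero.mpr (right_ne_zero_of_mul_eq_one h3))
      have hstab : ∀ x : Fin (n+1) → ℂ, (∀ l : Fin (n+1), m < (l:ℕ) → x l = 0) →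
          ∀ i₂ : Fin (n+1), m < (i₂:ℕ) → M.mulVec x i₂ = 0 := by
        intro x hx i₂ hi₂
        rw [Matrix.mulVec, dotProduct]
        apply Finset.sum_eq_zero
        intro l _
        rcases Nat.lt_or_ge m (l:ℕ) with h1 | h1
        · rw [hx l h1, mul_zero]
        · have hMl : M i₂ l = 0 := by
            rcases Nat.lt_or_ge ((l:ℕ)+1) (i₂:ℕ) with h2 | h2
            · rw [hM, Matrix.sub_apply, Matrix.smul_apply, h₂.1 i₂ l h2,
                h₂.2.1 i₂ l h2, smul_zero, sub_zero]
            · have hl : (l:ℕ) = m := by omega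
              have hi2 : (i₂:ℕ) = m + 1 := by omega
              have hls : l = p.castSucc := Fin.ext (by simp [hp, hl])
              have his : i₂ = p.succ := Fin.ext (by simp [hp, hi2])
              rw [hM, hls, his, Matrix.sub_apply, Matrix.smul_apply, (hpoles₂ p).2,
                smul_eq_mul, sub_self]
          rw [hMl, zero_mul]
      have hy : ∀ i₂ : Fin (n+1), m < (i₂:ℕ) → M.mulVec (fun l => V l j) i₂ = 0 := by
        intro i₂ hi₂
        have hmv : M.mulVec (fun l => V l j) i₂ = (M * V) i₂ j := by
          rw [Matrix.mul_apply, Matrix.mulVec, dotProduct]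
        rw [hmv, ← hUV_AB p, Matrix.mul_apply]
        apply Finset.sum_eq_zero
        intro l _
        rcases Nat.lt_or_ge m (l:ℕ) with h1 | h1
        · have hXl : (A₁ - ξ p • B₁) l j = 0 := by
            rcases Nat.lt_or_ge ((j:ℕ)+1) (l:ℕ) with h2 | h2
            · rw [Matrix.sub_apply, Matrix.smul_apply, h₁.1 l j h2,
                h₁.2.1 l j h2, smul_zero, sub_zero]
            · have hl : (l:ℕ) = m + 1 := by omega
              have hls : l = p.succ := Fin.ext (by simp [hp, hl])
              rw [hls, hjp, Matrix.sub_apply, Matrix.smul_apply, (hpoles₁ p).2,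
                smul_eq_mul, sub_self]
          rw [hXl, mul_zero]
        · have hUl : U i₂ l = 0 := by
            rcases Nat.lt_or_ge (l:ℕ) m with h2 | h2
            · exact (IH' l h2).1 i₂ (by intro h; rw [h] at hi₂; omega)
            · have : l = j := Fin.ext (by omega)
              rw [this]
              exact hUcol i₂ (by intro h; rw [h, hj] at hi₂; omega)
          rw [hUl, zero_mul]
      exact inv_stable M hMdet m hstab _ hy i (by omega)
  -- assemble everything
  have hUdiag : U.IsDiag := fun i j h => (key (j:ℕ) j rfl).1 i h
  have hVdiag : V.IsDiag := fun i j h => (key (j:ℕ) j rfl).2 i h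
  refine ⟨U, V, hUdiag, hVdiag, ?_, ?_, ?_, ?_, ?_, ?_⟩
  · apply Matrix.mem_unitaryGroup_iff'.mpr
    rw [Matrix.star_eq_conjTranspose]; exact hUstar
  · apply Matrix.mem_unitaryGroup_iff'.mpr
    rw [Matrix.star_eq_conjTranspose]; exact hVstar
  · rw [hU, hV, hA₁, hA₂, Matrix.conjTranspose_mul, Matrix.conjTranspose_conjTranspose]
    simp only [Matrix.mul_assoc]
    rw [cancel Q₂ _ hQ₂m, cancel Z₂ _ hZ₂m]
  · rw [hU, hV, hB₁, hB₂, Matrix.conjTranspose_mul, Matrix.conjTranspose_conjTranspose]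
    simp only [Matrix.mul_assoc]
    rw [cancel Q₂ _ hQ₂m, cancel Z₂ _ hZ₂m]
  · rw [hU, cancel Q₂ _ hQ₂m]
  · rw [hV, cancel Z₂ _ hZ₂m]
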